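/- Let δ, δ' ∈ (0, π/2) and let τ : ℝ → ℝ be continuous, 2π-periodic, with τ(t) = 0 for all t ∈ (−δ, δ') and τ(t) ≥ 0 for all t ∈ ℝ. Suppose there exist t₁ ∈ (π/2, π), t₂ ∈ (−π, −π/2) and ε̃ > 0 such that τ(t) ≥ ε̃ for all t ∈ [t₁, π] ∪ [−π, t₂]. Define, for |θ| < min(δ, δ')/2, F(θ) := (1/(2π)) · [ ∫_{−π+θ}^{−δ} τ(t)·cot((θ−t)/2) dt + ∫_{δ'}^{π+θ} τ(t)·cot((θ−t)/2) dt ]. Then the derivative of F at 0 satisfies F'(0) ≤ −(ε̃/(4π)) · ( (π − t₁) + (π + t₂) ) < 0. That is, F'(0) admits a strictly negative upper bound depending only on t₁, t₂ and ε̃ (and not on δ, δ' or on the particular τ). -/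

import Mathlib

open Real MeasureTheory

lemma sin_lb {x y : ℝ} (hy0 : 0 < y) (h1 : y ≤ x) (h2 : x ≤ π - y) :
    Real.sin y ≤ Real.sin x := by
  have hy2 : y ≤ π / 2 := by
    rcases le_or_gt x (π/2) with h | h
    · linarith
    · linarith [h2, h]
  rcases le_or_gt x (π/2) with h | h
  · exact Real.strictMonoOn_sin.monotoneOn ⟨by linarith, by linarith⟩ ⟨by linarith, h⟩ h1
  · rw [← Real.sin_pi_sub x]
    exact Real.strictMonoOn_sin.monotoneOn ⟨by linarith, hy2⟩ ⟨by linarith, by linarith⟩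
      (by linarith)

lemma derivK (τ : ℝ → ℝ) (hτc : Continuous τ) (a b r c₀ : ℝ) (hr : 0 < r) (hc : 0 < c₀)
    (hsin : ∀ θ ∈ Metric.ball (0:ℝ) r, ∀ t ∈ Set.uIcc a b, c₀ ≤ |Real.sin ((θ - t)/2)|) :
    HasDerivAt (fun θ => ∫ t in a..b, τ t * (Real.cos ((θ - t)/2) / Real.sin ((θ - t)/2)))
      (∫ t in a..b, τ t * (-(1/2) / Real.sin ((0 - t)/2)^2)) 0 := by
  have hmes : ∀ θ : ℝ, AEStronglyMeasurable
      (fun t => τ t * (Real.cos ((θ - t)/2) / Real.sin ((θ - t)/2)))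
      (volume.restrict (Set.uIoc a b)) := by
    intro θ
    have m : Measurable fun t : ℝ => (θ - t)/2 := (measurable_const.sub measurable_id).div_const 2
    exact ((hτc.measurable.mul ((Real.measurable_cos.comp m).div
      (Real.measurable_sin.comp m)))).aestronglyMeasurable
  have hne0 : ∀ t ∈ Set.uIcc a b, Real.sin ((0 - t)/2) ≠ 0 := by
    intro t ht
    have := hsin 0 (Metric.mem_ball_self hr) t ht
    intro h; rw [h] at this; simp at this; linarith
  have hF_int : IntervalIntegrable
      (fun t => τ t * (Real.cos ((0 - t)/2) / Real.sin ((0 - t)/2))) volume a b := by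
    apply ContinuousOn.intervalIntegrable
    apply hτc.continuousOn.mul
    apply ContinuousOn.div
    · exact (Real.continuous_cos.comp ((continuous_const.sub continuous_id).div_const 2)).continuousOn
    · exact (Real.continuous_sin.comp ((continuous_const.sub continuous_id).div_const 2)).continuousOn
    · exact hne0
  have hF'_meas : AEStronglyMeasurable
      (fun t => τ t * (-(1/2) / Real.sin ((0 - t)/2)^2)) (volume.restrict (Set.uIoc a b)) := by
    have m : Measurable fun t : ℝ => (0 - t)/2 := (measurable_const.sub measurable_id).div_const 2
    exact (hτc.measurable.mul (measurable_const.div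
      ((Real.measurable_sin.comp m).pow_const 2))).aestronglyMeasurable
  have key := intervalIntegral.hasDerivAt_integral_of_dominated_loc_of_deriv_le
    (μ := volume) (a := a) (b := b) (x₀ := (0:ℝ))
    (F := fun θ t => τ t * (Real.cos ((θ - t)/2) / Real.sin ((θ - t)/2)))
    (F' := fun θ t => τ t * (-(1/2) / Real.sin ((θ - t)/2)^2))
    (bound := fun t => |τ t| * ((1/2) / c₀^2))
    (Metric.ball_mem_nhds 0 hr) (Filter.Eventually.of_forall hmes) hF_int
    (by
      have m : Measurable fun t : ℝ => (0 - t)/2 := (measurable_const.sub measurable_id).div_const 2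
      exact (hτc.measurable.mul (measurable_const.div
        ((Real.measurable_sin.comp m).pow_const 2))).aestronglyMeasurable)
    (by
      apply Filter.Eventually.of_forall
      intro t ht θ hθ
      have hs := hsin θ hθ t (Set.Ioc_subset_Icc_self ht)
      have hs2 : c₀^2 ≤ Real.sin ((θ - t)/2)^2 := by
        rw [← sq_abs (Real.sin _)]
        exact pow_le_pow_left₀ hc.le hs 2
      rw [norm_mul]
      apply mul_le_mul_of_nonneg_left _ (norm_nonneg _)
      rw [Real.norm_eq_abs, abs_div, abs_neg]
      have h2 : |Real.sin ((θ - t)/2)^2| = Real.sin ((θ - t)/2)^2 := abs_of_nonneg (sq_nonneg _)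
      rw [h2]
      have : |(1:ℝ)/2| = 1/2 := by norm_num
      rw [this]
      apply div_le_div₀ (by norm_num) le_rfl (by positivity) hs2)
    (by
      apply Continuous.intervalIntegrable
      exact hτc.abs.mul continuous_const)
    (by
      apply Filter.Eventually.of_forall
      intro t ht θ hθ
      have hs := hsin θ hθ t (Set.Ioc_subset_Icc_self ht)
      have hne : Real.sin ((θ - t)/2) ≠ 0 := by
        intro h; rw [h] at hs; simp at hs; linarith
      have hu : HasDerivAt (fun θ : ℝ => (θ - t)/2) (1/2) θ := by
        simpa using ((hasDerivAt_id θ).sub_const t).div_const 2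
      have hdiv : HasDerivAt (fun x : ℝ => Real.cos x / Real.sin x)
          ((-Real.sin ((θ-t)/2) * Real.sin ((θ-t)/2) - Real.cos ((θ-t)/2) * Real.cos ((θ-t)/2))
            / Real.sin ((θ-t)/2)^2) ((θ - t)/2) :=
        (Real.hasDerivAt_cos _).div (Real.hasDerivAt_sin _) hne
      have hnum : -Real.sin ((θ-t)/2) * Real.sin ((θ-t)/2)
          - Real.cos ((θ-t)/2) * Real.cos ((θ-t)/2) = -1 := by
        nlinarith [Real.sin_sq_add_cos_sq ((θ-t)/2)]
      rw [hnum] at hdiv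
      have := (hdiv.comp θ hu).const_mul (τ t)
      convert this using 1
      · rfl
      · rfl
      · ring)
  exact key.2

lemma derivH (τ : ℝ → ℝ) (hτc : Continuous τ) (e r c₀ : ℝ) (hr : 0 < r) (hc : 0 < c₀)
    (hb : ∀ θ ∈ Metric.ball (0:ℝ) r, ∀ t ∈ Set.uIcc e (e+θ),
        c₀ ≤ |Real.sin ((θ - t)/2)| ∧ |Real.cos ((θ - t)/2)| ≤ |θ| / 2) :
    HasDerivAt (fun θ => ∫ t in e..(e+θ),
      τ t * (Real.cos ((θ - t)/2) / Real.sin ((θ - t)/2))) 0 0 := by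
  obtain ⟨M, hM⟩ := (isCompact_Icc (a := e - r) (b := e + r)).exists_bound_of_continuousOn
    hτc.continuousOn
  have hball : ∀ θ ∈ Metric.ball (0:ℝ) r,
      ‖∫ t in e..(e+θ), τ t * (Real.cos ((θ - t)/2) / Real.sin ((θ - t)/2))‖ ≤
        max M 0 / (2 * c₀) * ‖θ * θ‖ := by
    intro θ hθ
    have hθr : |θ| < r := by simpa [Real.dist_eq] using hθ
    have habs := abs_lt.mp hθr
    have h1 : ∀ t ∈ Set.uIoc e (e+θ),
        ‖τ t * (Real.cos ((θ - t)/2) / Real.sin ((θ - t)/2))‖ ≤ max M 0 * ((|θ|/2) / c₀) := by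
      intro t ht
      have ht' : t ∈ Set.uIcc e (e+θ) := Set.Ioc_subset_Icc_self ht
      obtain ⟨hsl, hcu⟩ := hb θ hθ t ht'
      have htI : t ∈ Set.Icc (e - r) (e + r) := by
        exact Set.uIcc_subset_Icc (Set.mem_Icc.mpr ⟨by linarith, by linarith⟩)
          (Set.mem_Icc.mpr ⟨by linarith, by linarith⟩) ht'
      have hτb : |τ t| ≤ max M 0 := le_trans (by simpa using hM t htI) (le_max_left _ _)
      rw [norm_mul, Real.norm_eq_abs, Real.norm_eq_abs, abs_div]
      exact mul_le_mul hτb (div_le_div₀ (by positivity) hcu hc hsl)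
        (by positivity) (le_max_right _ _)
    calc ‖∫ t in e..(e+θ), τ t * (Real.cos ((θ - t)/2) / Real.sin ((θ - t)/2))‖
        ≤ max M 0 * ((|θ|/2) / c₀) * |e + θ - e| :=
          intervalIntegral.norm_integral_le_of_norm_le_const h1
      _ = max M 0 / (2 * c₀) * ‖θ * θ‖ := by
          rw [show e + θ - e = θ by ring, Real.norm_eq_abs, abs_mul]
          field_simp
  have hO : (fun θ => ∫ t in e..(e+θ), τ t * (Real.cos ((θ - t)/2) / Real.sin ((θ - t)/2)))
      =O[nhds 0] fun θ => θ * θ :=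
    Asymptotics.IsBigO.of_bound _
      (by filter_upwards [Metric.ball_mem_nhds (0:ℝ) hr] with θ hθ using hball θ hθ)
  have ho : (fun θ : ℝ => θ * θ) =o[nhds 0] fun θ => θ := by
    have h1 : (fun θ : ℝ => θ) =o[nhds (0:ℝ)] fun _ => (1:ℝ) :=
      (Asymptotics.isLittleO_one_iff ℝ).mpr (continuous_id.tendsto' 0 0 rfl)
    simpa using h1.mul_isBigO (Asymptotics.isBigO_refl (fun θ : ℝ => θ) (nhds 0))
  have hlo := hO.trans_isLittleO ho
  rw [hasDerivAt_iff_isLittleO]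
  simpa using hlo

set_option maxHeartbeats 2000000 in
/-- Uniform negative bound on the derivative at `0` of
`F(θ) = (1/2π)·(∫_{-π+θ}^{-δ} τ(t)·cot((θ-t)/2) dt + ∫_{δ'}^{π+θ} τ(t)·cot((θ-t)/2) dt)`
when `τ ≥ 0` vanishes on `(-δ, δ')` and `τ ≥ ε̃` on `[t₁, π] ∪ [-π, t₂]`:
`F'(0) ≤ -(ε̃/4π)·((π - t₁) + (π + t₂)) < 0`. -/
theorem statement9 (δ δ' : ℝ) (hδ : δ ∈ Set.Ioo 0 (π / 2)) (hδ' : δ' ∈ Set.Ioo 0 (π / 2))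
    (τ : ℝ → ℝ) (hτc : Continuous τ) (hτp : ∀ t, τ (t + 2 * π) = τ t)
    (hτ0 : ∀ t ∈ Set.Ioo (-δ) δ', τ t = 0)
    (hτnn : ∀ t, 0 ≤ τ t)
    (t₁ t₂ : ℝ) (ht₁ : t₁ ∈ Set.Ioo (π / 2) π) (ht₂ : t₂ ∈ Set.Ioo (-π) (-π / 2))
    (epsTilde : ℝ) (heps : 0 < epsTilde)
    (hlow : ∀ t, t ∈ Set.Icc t₁ π ∪ Set.Icc (-π) t₂ → epsTilde ≤ τ t)
    (F : ℝ → ℝ)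
    (hF : ∀ θ : ℝ, F θ = (1 / (2 * π)) *
      ((∫ t in (-π + θ)..(-δ), τ t * (Real.cos ((θ - t) / 2) / Real.sin ((θ - t) / 2))) +
        ∫ t in δ'..(π + θ), τ t * (Real.cos ((θ - t) / 2) / Real.sin ((θ - t) / 2)))) :
    deriv F 0 ≤ -(epsTilde / (4 * π)) * ((π - t₁) + (π + t₂)) ∧
    -(epsTilde / (4 * π)) * ((π - t₁) + (π + t₂)) < 0 := by
  obtain ⟨hδ0, hδπ⟩ := hδ
  obtain ⟨hδ'0, hδ'π⟩ := hδ'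
  obtain ⟨ht₁l, ht₁u⟩ := ht₁
  obtain ⟨ht₂l, ht₂u⟩ := ht₂
  have hπ := Real.pi_pos
  set r : ℝ := min δ δ' / 4 with hrdef
  have hrδ : r ≤ δ / 4 := by
    have := min_le_left δ δ'
    rw [hrdef]; linarith
  have hrδ' : r ≤ δ' / 4 := by
    have := min_le_right δ δ'
    rw [hrdef]; linarith
  have hr : 0 < r := by
    rw [hrdef]
    have := lt_min hδ0 hδ'0
    linarith
  have hrπ : r < π / 8 := by linarith
  have hc₁ : 0 < Real.sin r := Real.sin_pos_of_pos_of_lt_pi hr (by linarith)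
  have hc₂ : 0 < Real.cos r := Real.cos_pos_of_mem_Ioo ⟨by linarith, by linarith⟩
  have habs_ne : ∀ {x c : ℝ}, 0 < c → c ≤ |x| → x ≠ 0 := by
    intro x c hc h hx
    rw [hx, abs_zero] at h; linarith
  -- lower bounds for |sin| on the fixed intervals
  have hsinK₁ : ∀ θ ∈ Metric.ball (0:ℝ) r, ∀ t ∈ Set.uIcc (-π) (-δ),
      Real.sin r ≤ |Real.sin ((θ - t)/2)| := by
    intro θ hθ t ht
    have hθr : -r < θ ∧ θ < r := abs_lt.mp (by simpa [Real.dist_eq] using hθ)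
    rw [Set.uIcc_of_le (by linarith), Set.mem_Icc] at ht
    have h1 : r ≤ (θ - t)/2 := by linarith
    have h2 : (θ - t)/2 ≤ π - r := by linarith
    exact le_trans (sin_lb hr h1 h2) (le_abs_self _)
  have hsinK₂ : ∀ θ ∈ Metric.ball (0:ℝ) r, ∀ t ∈ Set.uIcc δ' π,
      Real.sin r ≤ |Real.sin ((θ - t)/2)| := by
    intro θ hθ t ht
    have hθr : -r < θ ∧ θ < r := abs_lt.mp (by simpa [Real.dist_eq] using hθ)
    rw [Set.uIcc_of_le (by linarith), Set.mem_Icc] at ht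
    rw [show (θ - t)/2 = -((t - θ)/2) by ring, Real.sin_neg, abs_neg]
    have h1 : r ≤ (t - θ)/2 := by linarith
    have h2 : (t - θ)/2 ≤ π - r := by linarith
    exact le_trans (sin_lb hr h1 h2) (le_abs_self _)
  -- bounds near the endpoints
  have hbH₂ : ∀ θ ∈ Metric.ball (0:ℝ) r, ∀ t ∈ Set.uIcc π (π+θ),
      Real.cos r ≤ |Real.sin ((θ - t)/2)| ∧ |Real.cos ((θ - t)/2)| ≤ |θ| / 2 := by
    intro θ hθ t ht
    have hθr : -r < θ ∧ θ < r := abs_lt.mp (by simpa [Real.dist_eq] using hθ)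
    have hu : |θ + π - t| ≤ |θ| := by
      rcases le_total 0 θ with h | h
      · rw [Set.uIcc_of_le (by linarith), Set.mem_Icc] at ht
        rw [abs_of_nonneg h]
        exact abs_le.mpr ⟨by linarith, by linarith⟩
      · rw [Set.uIcc_of_ge (by linarith), Set.mem_Icc] at ht
        rw [abs_of_nonpos h]
        exact abs_le.mpr ⟨by linarith, by linarith⟩
    have hθa : |θ| < r := abs_lt.mpr hθr
    constructor
    · have h1 : Real.sin ((θ - t)/2) = -Real.cos ((θ - t)/2 + π/2) := by
        rw [Real.cos_add_pi_div_two]; ring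
      rw [h1, abs_neg]
      have h2 : |(θ - t)/2 + π/2| ≤ r := by
        rw [show (θ - t)/2 + π/2 = (θ + π - t)/2 by ring, abs_div, show |(2:ℝ)| = 2 by norm_num]
        linarith
      calc Real.cos r ≤ Real.cos |(θ - t)/2 + π/2| :=
            Real.cos_le_cos_of_nonneg_of_le_pi (abs_nonneg _) (by linarith) h2
        _ = Real.cos ((θ - t)/2 + π/2) := Real.cos_abs _
        _ ≤ |Real.cos ((θ - t)/2 + π/2)| := le_abs_self _
    · have h1 : Real.cos ((θ - t)/2) = Real.sin ((θ - t)/2 + π/2) :=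
        (Real.sin_add_pi_div_two _).symm
      rw [h1]
      calc |Real.sin ((θ - t)/2 + π/2)| ≤ |(θ - t)/2 + π/2| := Real.abs_sin_le_abs
        _ = |θ + π - t|/2 := by
            rw [show (θ - t)/2 + π/2 = (θ + π - t)/2 by ring, abs_div,
              show |(2:ℝ)| = 2 by norm_num]
        _ ≤ |θ|/2 := by linarith
  have hbH₁ : ∀ θ ∈ Metric.ball (0:ℝ) r, ∀ t ∈ Set.uIcc (-π) (-π+θ),
      Real.cos r ≤ |Real.sin ((θ - t)/2)| ∧ |Real.cos ((θ - t)/2)| ≤ |θ| / 2 := by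
    intro θ hθ t ht
    have hθr : -r < θ ∧ θ < r := abs_lt.mp (by simpa [Real.dist_eq] using hθ)
    have hu : |θ - π - t| ≤ |θ| := by
      rcases le_total 0 θ with h | h
      · rw [Set.uIcc_of_le (by linarith), Set.mem_Icc] at ht
        rw [abs_of_nonneg h]
        exact abs_le.mpr ⟨by linarith, by linarith⟩
      · rw [Set.uIcc_of_ge (by linarith), Set.mem_Icc] at ht
        rw [abs_of_nonpos h]
        exact abs_le.mpr ⟨by linarith, by linarith⟩
    have hθa : |θ| < r := abs_lt.mpr hθr
    constructor
    · have h1 : Real.sin ((θ - t)/2) = Real.cos ((θ - t)/2 - π/2) := by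
        rw [← Real.cos_neg, show -((θ - t)/2 - π/2) = π/2 - (θ - t)/2 by ring,
          Real.cos_pi_div_two_sub]
      rw [h1]
      have h2 : |(θ - t)/2 - π/2| ≤ r := by
        rw [show (θ - t)/2 - π/2 = (θ - π - t)/2 by ring, abs_div, show |(2:ℝ)| = 2 by norm_num]
        linarith
      calc Real.cos r ≤ Real.cos |(θ - t)/2 - π/2| :=
            Real.cos_le_cos_of_nonneg_of_le_pi (abs_nonneg _) (by linarith) h2
        _ = Real.cos ((θ - t)/2 - π/2) := Real.cos_abs _
        _ ≤ |Real.cos ((θ - t)/2 - π/2)| := le_abs_self _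
    · have h1 : Real.cos ((θ - t)/2) = Real.sin (π/2 - (θ - t)/2) :=
        (Real.sin_pi_div_two_sub _).symm
      rw [h1]
      calc |Real.sin (π/2 - (θ - t)/2)| ≤ |π/2 - (θ - t)/2| := Real.abs_sin_le_abs
        _ = |θ - π - t|/2 := by
            rw [show π/2 - (θ - t)/2 = -((θ - π - t)/2) by ring, abs_neg, abs_div,
              show |(2:ℝ)| = 2 by norm_num]
        _ ≤ |θ|/2 := by linarith
  -- derivatives of the four pieces
  have hK₁ := derivK τ hτc (-π) (-δ) r (Real.sin r) hr hc₁ hsinK₁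
  have hK₂ := derivK τ hτc δ' π r (Real.sin r) hr hc₁ hsinK₂
  have hH₁ := derivH τ hτc (-π) r (Real.cos r) hr hc₂ hbH₁
  have hH₂ := derivH τ hτc π r (Real.cos r) hr hc₂ hbH₂
  have hG : HasDerivAt (fun θ => (1 / (2 * π)) *
      ((-(∫ t in (-π)..(-π+θ), τ t * (Real.cos ((θ - t) / 2) / Real.sin ((θ - t) / 2))) +
        ∫ t in (-π)..(-δ), τ t * (Real.cos ((θ - t) / 2) / Real.sin ((θ - t) / 2))) +
       ((∫ t in δ'..π, τ t * (Real.cos ((θ - t) / 2) / Real.sin ((θ - t) / 2))) +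
        ∫ t in π..(π+θ), τ t * (Real.cos ((θ - t) / 2) / Real.sin ((θ - t) / 2)))))
      ((1 / (2 * π)) * ((-0 + ∫ t in (-π)..(-δ), τ t * (-(1/2) / Real.sin ((0 - t)/2)^2)) +
        ((∫ t in δ'..π, τ t * (-(1/2) / Real.sin ((0 - t)/2)^2)) + 0))) 0 :=
    ((hH₁.neg.add hK₁).add (hK₂.add hH₂)).const_mul (1 / (2 * π))
  have hFG : F =ᶠ[nhds 0] (fun θ => (1 / (2 * π)) *
      ((-(∫ t in (-π)..(-π+θ), τ t * (Real.cos ((θ - t) / 2) / Real.sin ((θ - t) / 2))) +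
        ∫ t in (-π)..(-δ), τ t * (Real.cos ((θ - t) / 2) / Real.sin ((θ - t) / 2))) +
       ((∫ t in δ'..π, τ t * (Real.cos ((θ - t) / 2) / Real.sin ((θ - t) / 2))) +
        ∫ t in π..(π+θ), τ t * (Real.cos ((θ - t) / 2) / Real.sin ((θ - t) / 2))))) := by
    filter_upwards [Metric.ball_mem_nhds (0:ℝ) hr] with θ hθ
    have gcont : ∀ p q : ℝ, (∀ t ∈ Set.uIcc p q, Real.sin ((θ - t)/2) ≠ 0) →
        IntervalIntegrable (fun t => τ t * (Real.cos ((θ - t) / 2) / Real.sin ((θ - t) / 2)))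
          volume p q := by
      intro p q hpq
      apply ContinuousOn.intervalIntegrable
      apply hτc.continuousOn.mul
      exact ContinuousOn.div
        (Real.continuous_cos.comp
          ((continuous_const.sub continuous_id).div_const 2)).continuousOn
        (Real.continuous_sin.comp
          ((continuous_const.sub continuous_id).div_const 2)).continuousOn hpq
    have int1 : IntervalIntegrable
        (fun t => τ t * (Real.cos ((θ - t) / 2) / Real.sin ((θ - t) / 2))) volume (-π+θ) (-π) :=
      gcont _ _ (fun t ht => habs_ne hc₂ ((hbH₁ θ hθ t (by rwa [Set.uIcc_comm] at ht)).1))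
    have int2 : IntervalIntegrable
        (fun t => τ t * (Real.cos ((θ - t) / 2) / Real.sin ((θ - t) / 2))) volume (-π) (-δ) :=
      gcont _ _ (fun t ht => habs_ne hc₁ (hsinK₁ θ hθ t ht))
    have int3 : IntervalIntegrable
        (fun t => τ t * (Real.cos ((θ - t) / 2) / Real.sin ((θ - t) / 2))) volume δ' π :=
      gcont _ _ (fun t ht => habs_ne hc₁ (hsinK₂ θ hθ t ht))
    have int4 : IntervalIntegrable
        (fun t => τ t * (Real.cos ((θ - t) / 2) / Real.sin ((θ - t) / 2))) volume π (π+θ) :=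
      gcont _ _ (fun t ht => habs_ne hc₂ ((hbH₂ θ hθ t ht).1))
    rw [hF θ, ← intervalIntegral.integral_add_adjacent_intervals int1 int2,
      ← intervalIntegral.integral_add_adjacent_intervals int3 int4,
      intervalIntegral.integral_symm (-π) (-π+θ)]
  have hderiv : deriv F 0 =
      (1 / (2 * π)) * ((-0 + ∫ t in (-π)..(-δ), τ t * (-(1/2) / Real.sin ((0 - t)/2)^2)) +
        ((∫ t in δ'..π, τ t * (-(1/2) / Real.sin ((0 - t)/2)^2)) + 0)) := by
    rw [hFG.deriv_eq]
    exact hG.deriv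
  -- rewrite the derivative integrals
  have hfun : ∀ a b : ℝ, (∫ t in a..b, τ t * (-(1/2) / Real.sin ((0 - t)/2)^2)) =
      -(1/2) * ∫ t in a..b, τ t / Real.sin (t/2)^2 := by
    intro a b
    have heq : (fun t => τ t * (-(1/2) / Real.sin ((0 - t)/2)^2)) =
        fun t => -(1/2) * (τ t / Real.sin (t/2)^2) := by
      funext t
      rw [show (0 - t)/2 = -(t/2) by ring, Real.sin_neg]
      ring
    rw [heq, intervalIntegral.integral_const_mul]
  -- lower bounds for the two positive integrals
  have hcontA : ContinuousOn (fun t => τ t / Real.sin (t/2)^2) (Set.Icc δ' π) := by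
    apply hτc.continuousOn.div
    · exact ((Real.continuous_sin.comp (continuous_id.div_const 2)).pow 2).continuousOn
    · intro t ht
      rw [Set.mem_Icc] at ht
      have h0 : 0 < Real.sin (t/2) :=
        Real.sin_pos_of_pos_of_lt_pi (by linarith) (by linarith)
      positivity
  have hcontB : ContinuousOn (fun t => τ t / Real.sin (t/2)^2) (Set.Icc (-π) (-δ)) := by
    apply hτc.continuousOn.div
    · exact ((Real.continuous_sin.comp (continuous_id.div_const 2)).pow 2).continuousOn
    · intro t ht
      rw [Set.mem_Icc] at ht
      have h0 : Real.sin (t/2) < 0 :=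
        Real.sin_neg_of_neg_of_neg_pi_lt (by linarith) (by linarith)
      have h1 : Real.sin (t/2) ≠ 0 := ne_of_lt h0
      positivity
  have hintA1 : IntervalIntegrable (fun t => τ t / Real.sin (t/2)^2) volume δ' t₁ := by
    apply ContinuousOn.intervalIntegrable
    rw [Set.uIcc_of_le (by linarith)]
    exact hcontA.mono (Set.Icc_subset_Icc le_rfl (by linarith))
  have hintA2 : IntervalIntegrable (fun t => τ t / Real.sin (t/2)^2) volume t₁ π := by
    apply ContinuousOn.intervalIntegrable
    rw [Set.uIcc_of_le (by linarith)]
    exact hcontA.mono (Set.Icc_subset_Icc (by linarith) le_rfl)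
  have hintB1 : IntervalIntegrable (fun t => τ t / Real.sin (t/2)^2) volume (-π) t₂ := by
    apply ContinuousOn.intervalIntegrable
    rw [Set.uIcc_of_le (by linarith)]
    exact hcontB.mono (Set.Icc_subset_Icc le_rfl (by linarith))
  have hintB2 : IntervalIntegrable (fun t => τ t / Real.sin (t/2)^2) volume t₂ (-δ) := by
    apply ContinuousOn.intervalIntegrable
    rw [Set.uIcc_of_le (by linarith)]
    exact hcontB.mono (Set.Icc_subset_Icc (by linarith) le_rfl)
  have hh : ∀ t, 0 ≤ τ t / Real.sin (t/2)^2 := fun t => div_nonneg (hτnn t) (sq_nonneg _)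
  have hA2 : epsTilde * (π - t₁) ≤ ∫ t in t₁..π, τ t / Real.sin (t/2)^2 := by
    have hmono := intervalIntegral.integral_mono_on (by linarith : t₁ ≤ π)
      (intervalIntegrable_const (c := epsTilde)) hintA2 (fun t ht => ?_)
    · rw [intervalIntegral.integral_const, smul_eq_mul] at hmono
      linarith [hmono]
    · rw [Set.mem_Icc] at ht
      have hs : 0 < Real.sin (t/2) :=
        Real.sin_pos_of_pos_of_lt_pi (by linarith) (by linarith)
      have hs1 : Real.sin (t/2)^2 ≤ 1 := Real.sin_sq_le_one _
      have hτt := hlow t (Or.inl ⟨ht.1, ht.2⟩)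
      rw [le_div_iff₀ (by positivity)]
      nlinarith
  have hA1 : 0 ≤ ∫ t in δ'..t₁, τ t / Real.sin (t/2)^2 :=
    intervalIntegral.integral_nonneg (by linarith) (fun u _ => hh u)
  have hAlb : epsTilde * (π - t₁) ≤ ∫ t in δ'..π, τ t / Real.sin (t/2)^2 := by
    rw [← intervalIntegral.integral_add_adjacent_intervals hintA1 hintA2]
    linarith
  have hB1 : epsTilde * (π + t₂) ≤ ∫ t in (-π)..t₂, τ t / Real.sin (t/2)^2 := by
    have hmono := intervalIntegral.integral_mono_on (by linarith : -π ≤ t₂)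
      (intervalIntegrable_const (c := epsTilde)) hintB1 (fun t ht => ?_)
    · rw [intervalIntegral.integral_const, smul_eq_mul] at hmono
      have : t₂ - -π = π + t₂ := by ring
      rw [this] at hmono
      linarith [hmono]
    · rw [Set.mem_Icc] at ht
      have hs : Real.sin (t/2) < 0 :=
        Real.sin_neg_of_neg_of_neg_pi_lt (by linarith) (by linarith)
      have hsne : Real.sin (t/2) ≠ 0 := ne_of_lt hs
      have hs1 : Real.sin (t/2)^2 ≤ 1 := Real.sin_sq_le_one _
      have hτt := hlow t (Or.inr ⟨ht.1, ht.2⟩)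
      rw [le_div_iff₀ (by positivity)]
      nlinarith
  have hB2 : 0 ≤ ∫ t in t₂..(-δ), τ t / Real.sin (t/2)^2 :=
    intervalIntegral.integral_nonneg (by linarith) (fun u _ => hh u)
  have hBlb : epsTilde * (π + t₂) ≤ ∫ t in (-π)..(-δ), τ t / Real.sin (t/2)^2 := by
    rw [← intervalIntegral.integral_add_adjacent_intervals hintB1 hintB2]
    linarith
  constructor
  · rw [hderiv, hfun (-π) (-δ), hfun δ' π]
    set A : ℝ := ∫ t in δ'..π, τ t / Real.sin (t/2)^2
    set B : ℝ := ∫ t in (-π)..(-δ), τ t / Real.sin (t/2)^2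
    have hS : epsTilde * ((π - t₁) + (π + t₂)) ≤ A + B := by
      have : epsTilde * ((π - t₁) + (π + t₂)) = epsTilde * (π - t₁) + epsTilde * (π + t₂) := by
        ring
      linarith
    have h1 : (1 / (2 * π)) * ((-0 + -(1/2) * B) + (-(1/2) * A + 0)) = -(1/(4*π)) * (A + B) := by
      field_simp
      ring
    have h2 : -(epsTilde / (4 * π)) * ((π - t₁) + (π + t₂)) =
        -(1/(4*π)) * (epsTilde * ((π - t₁) + (π + t₂))) := by ring
    rw [h1, h2]
    have h3 : (0:ℝ) ≤ 1/(4*π) := by positivity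
    nlinarith [mul_le_mul_of_nonneg_left hS h3]
  · apply mul_neg_of_neg_of_pos
    · have : 0 < epsTilde / (4 * π) := by positivity
      linarith
    · linarith
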